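/- For every propositional base K, if M is a minimal inconsistent subset (MIS) of K, then M is an O-MIS of K, i.e., there exists a Minimal Inconsistency Relation ∼ of K such that M = form_mir(∼). -/

import Mathlib

namespace Occ

/-- Propositional formulas over variables indexed by `ℕ`,
built from variables using negation and conjunction. -/
inductive Form : Type where
  | var : ℕ → Form
  | neg : Form → Form
  | conj : Form → Form → Form
deriving DecidableEq

/-- Boolean evaluation of a formula under an interpretation `w`. -/
def eval (w : ℕ → Bool) : Form → Bool
  | .var p => w p
  | .neg φ => !(eval w φ)
  | .conj φ ψ => eval w φ && eval w ψ

/-- The variables occurring in a formula. -/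
def vars : Form → Finset ℕ
  | .var p => {p}
  | .neg φ => vars φ
  | .conj φ ψ => vars φ ∪ vars ψ

/-- A step in a path addressing a subformula occurrence. -/
inductive Step : Type where
  | neg | left | right
deriving DecidableEq

/-- `occAt φ l pol = some (p, pol')` iff the path `l` addresses an occurrence of the
variable `p` in `φ`, and this occurrence has polarity `pol'` (`true` = positive)
when the ambient polarity of `φ` is `pol`. -/
def occAt : Form → List Step → Bool → Option (ℕ × Bool)
  | .var p, [], pol => some (p, pol)
  | .neg φ, .neg :: l, pol => occAt φ l (!pol)
  | .conj φ _, .left :: l, pol => occAt φ l pol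
  | .conj _ ψ, .right :: l, pol => occAt ψ l pol
  | _, _, _ => none

/-- A variable occurrence in a base: a formula together with a path into it. -/
abbrev Occurrence : Type := Form × List Step

/-- A propositional base: a finite set of formulas. -/
abbrev PB : Type := Finset Form

/-- `o` is a variable occurrence in the base `K`. -/
def IsOcc (K : PB) (o : Occurrence) : Prop :=
  o.1 ∈ K ∧ ∃ p pol, occAt o.1 o.2 true = some (p, pol)

/-- `o` is an occurrence of the variable `p` in `K`, of polarity `pol`. -/
def IsOccOf (K : PB) (o : Occurrence) (p : ℕ) (pol : Bool) : Prop :=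
  o.1 ∈ K ∧ occAt o.1 o.2 true = some (p, pol)

/-- `o` is an occurrence of the variable `p` in `K`. -/
def IsOccVar (K : PB) (o : Occurrence) (p : ℕ) : Prop :=
  ∃ pol, IsOccOf K o p pol

/-- `o` is a positive variable occurrence in `K`. -/
def IsPosOcc (K : PB) (o : Occurrence) : Prop := ∃ p, IsOccOf K o p true

/-- `o` is a negative variable occurrence in `K`. -/
def IsNegOcc (K : PB) (o : Occurrence) : Prop := ∃ p, IsOccOf K o p false

/-- `o` and `o'` are occurrences of the same variable. -/
def sameVar (o o' : Occurrence) : Prop :=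
  ∃ p pol pol', occAt o.1 o.2 true = some (p, pol) ∧ occAt o'.1 o'.2 true = some (p, pol')

/-- The variables occurring in a base. -/
def varsPB (K : PB) : Finset ℕ := K.sup vars

/-- `w` is a (Boolean) model of the base `K` (i.e. of the conjunction of its formulas). -/
def modelsPB (w : ℕ → Bool) (K : PB) : Prop := ∀ φ ∈ K, eval w φ = true

/-- A base is consistent iff the conjunction of its formulas has a model. -/
def ConsistentPB (K : PB) : Prop := ∃ w, modelsPB w K

/-- Classical entailment from a base. -/
def Entails (K : PB) (φ : Form) : Prop := ∀ w, modelsPB w K → eval w φ = true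

/-- Rename every variable occurrence of a formula, the new variable of the
occurrence at path `l` being `f l`. -/
def renameBy : (List Step → ℕ) → Form → Form
  | f, .var _ => .var (f [])
  | f, .neg φ => .neg (renameBy (fun l => f (.neg :: l)) φ)
  | f, .conj φ ψ =>
      .conj (renameBy (fun l => f (.left :: l)) φ) (renameBy (fun l => f (.right :: l)) ψ)

/-- The formula `φ` (viewed as a member of a base) with each occurrence `o`
replaced by the variable `R o`. -/
def renameForm (R : Occurrence → ℕ) (φ : Form) : Form :=
  renameBy (fun l => R (φ, l)) φ

/-- A C-renaming of `K`: it assigns a pairwise distinct fresh variable to each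
occurrence of `K`. -/
structure IsCRenaming (K : PB) (R : Occurrence → ℕ) : Prop where
  fresh : ∀ o, IsOcc K o → R o ∉ varsPB K
  inj : ∀ o o', IsOcc K o → IsOcc K o' → R o = R o' → o = o'

/-- Binary relations on occurrences, viewed as sets of ordered pairs. -/
abbrev Rel : Type := Set (Occurrence × Occurrence)

/-- `r` is an equivalence relation on `Occ(K)`. -/
structure IsEquivOn (K : PB) (r : Rel) : Prop where
  dom : ∀ q ∈ r, IsOcc K q.1 ∧ IsOcc K q.2
  refl : ∀ o, IsOcc K o → (o, o) ∈ r
  symm : ∀ q ∈ r, (q.2, q.1) ∈ r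
  trans : ∀ a b c : Occurrence, (a, b) ∈ r → (b, c) ∈ r → (a, c) ∈ r

/-- Compliance: related occurrences are occurrences of the same variable. -/
def Compliant (r : Rel) : Prop := ∀ q ∈ r, sameVar q.1 q.2

/-- Consistency of the formula `⋀R(K) ∧ ⋀_{(o,o')∈r} (R(o) ↔ R(o'))`. -/
def RelConsistent (K : PB) (R : Occurrence → ℕ) (r : Rel) : Prop :=
  ∃ w : ℕ → Bool, (∀ φ ∈ K, eval w (renameForm R φ) = true) ∧
    ∀ q ∈ r, w (R q.1) = w (R q.2)

/-- Minimal Inconsistency Relation of `K` (w.r.t. the C-renaming `R`). -/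
def IsMIR (K : PB) (R : Occurrence → ℕ) (r : Rel) : Prop :=
  IsEquivOn K r ∧ Compliant r ∧ ¬ RelConsistent K R r ∧
    ∀ r', IsEquivOn K r' → Compliant r' → ¬ RelConsistent K R r' → ¬ r' ⊂ r

/-- Maximal Consistency Relation of `K` (w.r.t. the C-renaming `R`). -/
def IsMCR (K : PB) (R : Occurrence → ℕ) (r : Rel) : Prop :=
  IsEquivOn K r ∧ Compliant r ∧ RelConsistent K R r ∧
    ∀ r', IsEquivOn K r' → Compliant r' → RelConsistent K R r' → ¬ r ⊂ r'

/-- The relation `∼_c^K`: relating occurrences of `K` of the same variable. -/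
def sameVarRel (K : PB) : Rel :=
  {q | IsOcc K q.1 ∧ IsOcc K q.2 ∧ sameVar q.1 q.2}

/-- `PN(r)`: related pairs consisting of a positive and a negative occurrence. -/
def PN (K : PB) (r : Rel) : Rel :=
  {q | q ∈ r ∧ IsPosOcc K q.1 ∧ IsNegOcc K q.2}

/-- A BMCR: an MCR satisfying Maximality-2. -/
def IsBMCR (K : PB) (R : Occurrence → ℕ) (r : Rel) : Prop :=
  IsMCR K R r ∧
    ∀ r', IsEquivOn K r' → Compliant r' → RelConsistent K R r' → ¬ PN K r ⊂ PN K r'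

/-- `H` is a hitting set of the collection `S`. -/
def IsHittingSet {α : Type} (S : Set (Set α)) (H : Set α) : Prop :=
  ∀ s ∈ S, (s ∩ H).Nonempty

/-- `H` is a minimal hitting set of the collection `S`. -/
def IsMinHittingSet {α : Type} (S : Set (Set α)) (H : Set α) : Prop :=
  IsHittingSet S H ∧ ∀ H', H' ⊂ H → ¬ IsHittingSet S H'

/-- `r` is `H`-maximal (for an equivalence relation `r ⊆ ∼_c^K`). -/
def IsHMaximal (K : PB) (H r : Rel) : Prop :=
  r ∩ H = ∅ ∧
    ∀ r', IsEquivOn K r' → r' ⊆ sameVarRel K → r ⊂ r' → (r' ∩ H).Nonempty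

/-- `r` is `H`-minimal (for an equivalence relation `r ⊆ ∼_c^K`). -/
def IsHMinimal (K : PB) (H r : Rel) : Prop :=
  H ⊆ r ∧ ∀ r', IsEquivOn K r' → r' ⊂ r → ¬ H ⊆ r'

/-- The set of all MIRs of `K`. -/
def MIRs (K : PB) (R : Occurrence → ℕ) : Set Rel := {r | IsMIR K R r}

/-- The set of all C-MCRs of `K`: relations `θ ⊆ ∼_c^K` with `∼_c^K ∖ θ` an MCR. -/
def CMCRs (K : PB) (R : Occurrence → ℕ) : Set Rel :=
  {θ | θ ⊆ sameVarRel K ∧ IsMCR K R (sameVarRel K \ θ)}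

/-- `ρ` is a `∼`-renaming for the equivalence relation `r` on `Occ(K)`:
it assigns a distinct variable to each equivalence class (so it is constant on
classes and distinguishes distinct classes), and any class containing all the
occurrences of a variable `p` is mapped to `p` itself. -/
def IsClassRenaming (K : PB) (r : Rel) (ρ : Occurrence → ℕ) : Prop :=
  (∀ o o', IsOcc K o → IsOcc K o' → (ρ o = ρ o' ↔ (o, o') ∈ r)) ∧
    (∀ o p, IsOccVar K o p → (∀ o', IsOccVar K o' p → (o, o') ∈ r) → ρ o = p)

/-- `σ` encodes a tuple `(q₁,…,q_m) ∈ P(ρ_∼, S)` where `S = (p₁,…,p_m)`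
enumerates `var(K) ∩ var(φ)`: it maps each shared variable `p` to a member of
`⌈ρ⌉(p)` and is the identity elsewhere. -/
def IsTupleChoice (K : PB) (φ : Form) (ρ : Occurrence → ℕ) (σ : ℕ → ℕ) : Prop :=
  (∀ p, p ∈ varsPB K → p ∈ vars φ → ∃ o, IsOccVar K o p ∧ σ p = ρ o) ∧
    (∀ p, ¬ (p ∈ varsPB K ∧ p ∈ vars φ) → σ p = p)

/-- Simultaneous substitution of variables by variables. -/
def substV (σ : ℕ → ℕ) : Form → Form
  | .var p => .var (σ p)
  | .neg φ => .neg (substV σ φ)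
  | .conj φ ψ => .conj (substV σ φ) (substV σ ψ)

/-- `ρ_∼(K) ⊢ ψ`. -/
def rhoEntails (K : PB) (ρ : Occurrence → ℕ) (ψ : Form) : Prop :=
  ∀ w : ℕ → Bool, (∀ φ ∈ K, eval w (renameForm ρ φ) = true) → eval w ψ = true

/-- The inference relation `K ⊩₁ φ`. -/
def Inf1 (K : PB) (R : Occurrence → ℕ) (φ : Form) : Prop :=
  ∀ r ρ, IsMCR K R r → IsClassRenaming K r ρ →
    ∃ σ, IsTupleChoice K φ ρ σ ∧ rhoEntails K ρ (substV σ φ)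

/-- The inference relation `K ⊩₂ φ`. -/
def Inf2 (K : PB) (R : Occurrence → ℕ) (φ : Form) : Prop :=
  ∀ r ρ, IsMCR K R r → IsClassRenaming K r ρ →
    ∀ σ, IsTupleChoice K φ ρ σ → rhoEntails K ρ (substV σ φ)

/-- The inference relation `K ⊩₁^B φ`. -/
def Inf1B (K : PB) (R : Occurrence → ℕ) (φ : Form) : Prop :=
  ∀ r ρ, IsBMCR K R r → IsClassRenaming K r ρ →
    ∃ σ, IsTupleChoice K φ ρ σ ∧ rhoEntails K ρ (substV σ φ)

/-- The inference relation `K ⊩₂^B φ`. -/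
def Inf2B (K : PB) (R : Occurrence → ℕ) (φ : Form) : Prop :=
  ∀ r ρ, IsBMCR K R r → IsClassRenaming K r ρ →
    ∀ σ, IsTupleChoice K φ ρ σ → rhoEntails K ρ (substV σ φ)

/-- `μ` is an o-model of `K`: any interpretation `w` with `w (R o) = μ o` for all
occurrences `o` of `K` is a model of `⋀R(K)`. -/
def OModel (K : PB) (R : Occurrence → ℕ) (μ : Occurrence → Bool) : Prop :=
  ∀ w : ℕ → Bool, (∀ o, IsOcc K o → w (R o) = μ o) →
    ∀ φ ∈ K, eval w (renameForm R φ) = true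

/-- `diff_a(μ)`: pairs of occurrences of the same variable on which `μ` differs. -/
def diffA (K : PB) (μ : Occurrence → Bool) : Rel :=
  {q | IsOcc K q.1 ∧ IsOcc K q.2 ∧ sameVar q.1 q.2 ∧ μ q.1 ≠ μ q.2}

/-- `μ` is an a-minimal o-model of `K`. -/
def AMinOModel (K : PB) (R : Occurrence → ℕ) (μ : Occurrence → Bool) : Prop :=
  OModel K R μ ∧ ∀ μ', OModel K R μ' → ¬ diffA K μ' ⊂ diffA K μ

/-- A Boolean interpretation `w` is compatible with an o-interpretation `μ`. -/
def Compatible (K : PB) (μ : Occurrence → Bool) (w : ℕ → Bool) : Prop :=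
  ∀ p ∈ varsPB K, ∃ o, IsOccVar K o p ∧ w p = μ o

/-- The inference relation `K ⊩_{a1} φ`. -/
def InfA1 (K : PB) (R : Occurrence → ℕ) (φ : Form) : Prop :=
  ∀ μ, AMinOModel K R μ → ∃ w, Compatible K μ w ∧ eval w φ = true

/-- The inference relation `K ⊩_{a2} φ`. -/
def InfA2 (K : PB) (R : Occurrence → ℕ) (φ : Form) : Prop :=
  ∀ μ, AMinOModel K R μ → ∀ w, Compatible K μ w → eval w φ = true

/-- LP_m evaluation: an LP_m interpretation assigns a (nonempty) set of truth
values to each variable; it extends to formulas pointwise. -/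
def lpEval (lam : ℕ → Set Bool) : Form → Set Bool
  | .var p => lam p
  | .neg φ => (fun v => !v) '' lpEval lam φ
  | .conj φ ψ => Set.image2 (· && ·) (lpEval lam φ) (lpEval lam ψ)

/-- `lam` is an LP_m interpretation: each variable gets a nonempty set of values. -/
def IsLPInterp (lam : ℕ → Set Bool) : Prop := ∀ p, (lam p).Nonempty

/-- `lam` is an LP_m model of `⋀K`. -/
def LPModelPB (lam : ℕ → Set Bool) (K : PB) : Prop := ∀ φ ∈ K, true ∈ lpEval lam φ

/-- `λ! = {p : λ(p) = {0,1}}`. -/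
def lpBang (lam : ℕ → Set Bool) : Set ℕ := {p | lam p = Set.univ}

/-- `lam` is a minimal LP_m model of `⋀K`. -/
def MinLPModelPB (K : PB) (lam : ℕ → Set Bool) : Prop :=
  IsLPInterp lam ∧ LPModelPB lam K ∧
    ∀ lam', IsLPInterp lam' → LPModelPB lam' K → ¬ lpBang lam' ⊂ lpBang lam

/-- `K ⊢_{LPm} φ`. -/
def LPmEntails (K : PB) (φ : Form) : Prop :=
  ∀ lam, MinLPModelPB K lam → true ∈ lpEval lam φ

/-- Replace the subformula occurrence of `φ` addressed by the path `l` by `ψ`. -/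
def replaceAt : Form → List Step → Form → Form
  | _, [], ψ => ψ
  | .neg φ, .neg :: l, ψ => .neg (replaceAt φ l ψ)
  | .conj φ χ, .left :: l, ψ => .conj (replaceAt φ l ψ) χ
  | .conj φ χ, .right :: l, ψ => .conj φ (replaceAt χ l ψ)
  | φ, _, _ => φ

/-- The equivalence relation `∼_λ` induced on `Occ(K)` by an LP_m interpretation:
its classes are `Occ(p,K)` for `|λ(p)| = 1` and `PosOcc(p,K)`, `NegOcc(p,K)` for
`λ(p) = {0,1}`. -/
def lamRel (K : PB) (lam : ℕ → Set Bool) : Rel :=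
  {q | ∃ p pol pol', IsOccOf K q.1 p pol ∧ IsOccOf K q.2 p pol' ∧
    (lam p = Set.univ → pol = pol')}

open scoped Classical in
/-- The o-interpretation `μ_λ^K` associated with an LP_m interpretation `λ`. -/
noncomputable def muOf (lam : ℕ → Set Bool) (o : Occurrence) : Bool :=
  match occAt o.1 o.2 true with
  | some (p, pol) =>
      if lam p = ({false} : Set Bool) then false
      else if lam p = ({true} : Set Bool) then true
      else pol
  | none => false

end Occ
namespace OMISAux
open Occ

/-- Evaluate a formula where the occurrence at path `l` gets value `g l`. -/
def evalOcc (g : List Step → Bool) : Form → Bool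
  | .var _ => g []
  | .neg φ => !(evalOcc (fun l => g (.neg :: l)) φ)
  | .conj φ ψ => evalOcc (fun l => g (.left :: l)) φ && evalOcc (fun l => g (.right :: l)) ψ

lemma evalOcc_renameBy (w : ℕ → Bool) : ∀ (φ : Form) (f : List Step → ℕ),
    eval w (renameBy f φ) = evalOcc (fun l => w (f l)) φ
  | .var p, f => rfl
  | .neg φ, f => by
      simp only [renameBy, eval, evalOcc, evalOcc_renameBy w φ]
  | .conj φ ψ, f => by
      simp only [renameBy, eval, evalOcc, evalOcc_renameBy w φ, evalOcc_renameBy w ψ]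

lemma evalOcc_congr : ∀ (φ : Form) (pol : Bool) (g g' : List Step → Bool),
    (∀ l, (occAt φ l pol).isSome → g l = g' l) → evalOcc g φ = evalOcc g' φ
  | .var p, pol, g, g', h => by
      simp only [evalOcc]
      exact h [] (by simp [occAt])
  | .neg φ, pol, g, g', h => by
      simp only [evalOcc]
      rw [evalOcc_congr φ (!pol) _ _ (fun l hl => h (.neg :: l) hl)]
  | .conj φ ψ, pol, g, g', h => by
      simp only [evalOcc]
      rw [evalOcc_congr φ pol _ _ (fun l hl => h (.left :: l) hl),
          evalOcc_congr ψ pol _ _ (fun l hl => h (.right :: l) hl)]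

lemma evalOcc_eval (v : ℕ → Bool) : ∀ (φ : Form) (pol : Bool) (g : List Step → Bool),
    (∀ l p pol', occAt φ l pol = some (p, pol') → g l = v p) → evalOcc g φ = eval v φ
  | .var p, pol, g, h => by
      simp only [evalOcc, eval]
      exact h [] p pol rfl
  | .neg φ, pol, g, h => by
      simp only [evalOcc, eval]
      rw [evalOcc_eval v φ (!pol) _ (fun l p pol' hl => h (.neg :: l) p pol' hl)]
  | .conj φ ψ, pol, g, h => by
      simp only [evalOcc, eval]
      rw [evalOcc_eval v φ pol _ (fun l p pol' hl => h (.left :: l) p pol' hl),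
          evalOcc_eval v ψ pol _ (fun l p pol' hl => h (.right :: l) p pol' hl)]

/-- A choice of values for the occurrences of `φ` making it evaluate to `b`. -/
def occVal : Form → Bool → List Step → Bool
  | .var _, b, _ => b
  | .neg φ, b, .neg :: l => occVal φ (!b) l
  | .conj φ _, b, .left :: l => occVal φ b l
  | .conj _ ψ, _, .right :: l => occVal ψ true l
  | _, _, _ => false

lemma evalOcc_occVal : ∀ (φ : Form) (b : Bool), evalOcc (occVal φ b) φ = b
  | .var _, b => rfl
  | .neg φ, b => by
      simp only [evalOcc]
      have h : (fun l => occVal (.neg φ) b (.neg :: l)) = occVal φ (!b) := rfl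
      rw [h, evalOcc_occVal φ (!b), Bool.not_not]
  | .conj φ ψ, b => by
      simp only [evalOcc]
      have h1 : (fun l => occVal (.conj φ ψ) b (.left :: l)) = occVal φ b := rfl
      have h2 : (fun l => occVal (.conj φ ψ) b (.right :: l)) = occVal ψ true := rfl
      rw [h1, h2, evalOcc_occVal φ b, evalOcc_occVal ψ true, Bool.and_true]

/-- The (finitely many) occurrence paths of a formula. -/
def occPaths : Form → Finset (List Step)
  | .var _ => {[]}
  | .neg φ => (occPaths φ).image (.neg :: ·)
  | .conj φ ψ => (occPaths φ).image (.left :: ·) ∪ (occPaths ψ).image (.right :: ·)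

lemma mem_occPaths : ∀ (φ : Form) (l : List Step) (pol : Bool) (x : ℕ × Bool),
    occAt φ l pol = some x → l ∈ occPaths φ := by
  intro φ
  induction φ with
  | var p =>
      intro l pol x h
      cases l with
      | nil => simp [occPaths]
      | cons s l => simp [occAt] at h
  | neg φ ih =>
      intro l pol x h
      cases l with
      | nil => simp [occAt] at h
      | cons s l =>
          cases s with
          | neg =>
              simp only [occPaths, Finset.mem_image]
              exact ⟨l, ih l (!pol) x h, rfl⟩
          | left => simp [occAt] at h
          | right => simp [occAt] at h
  | conj φ ψ ihφ ihψ =>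
      intro l pol x h
      cases l with
      | nil => simp [occAt] at h
      | cons s l =>
          cases s with
          | neg => simp [occAt] at h
          | left =>
              simp only [occPaths, Finset.mem_union, Finset.mem_image]
              exact Or.inl ⟨l, ihφ l pol x h, rfl⟩
          | right =>
              simp only [occPaths, Finset.mem_union, Finset.mem_image]
              exact Or.inr ⟨l, ihψ l pol x h, rfl⟩

lemma occ_finite (K : PB) : {o : Occurrence | IsOcc K o}.Finite := by
  apply Set.Finite.subset (Finset.finite_toSet (K ×ˢ K.sup occPaths))
  rintro ⟨φ, l⟩ ⟨hφ, p, pol, h⟩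
  simp only [Finset.coe_product, Set.mem_prod, Finset.mem_coe]
  exact ⟨hφ, Finset.mem_sup.2 ⟨φ, hφ, mem_occPaths φ l true (p, pol) h⟩⟩

/-- The variable of an occurrence. -/
noncomputable def varOf (o : Occurrence) : ℕ := ((occAt o.1 o.2 true).map Prod.fst).getD 0

lemma varOf_eq {o : Occurrence} {p : ℕ} {pol : Bool}
    (h : occAt o.1 o.2 true = some (p, pol)) : varOf o = p := by
  simp [varOf, h]

lemma sameVar_varOf {o o' : Occurrence} (h : sameVar o o') : varOf o = varOf o' := by
  obtain ⟨p, pol, pol', h1, h2⟩ := h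
  rw [varOf_eq h1, varOf_eq h2]

lemma sameVar_refl {K : PB} {o : Occurrence} (h : IsOcc K o) : sameVar o o := by
  obtain ⟨_, p, pol, h⟩ := h
  exact ⟨p, pol, pol, h, h⟩

lemma sameVar_trans {a b c : Occurrence} (h1 : sameVar a b) (h2 : sameVar b c) :
    sameVar a c := by
  obtain ⟨p, pol1, pol2, ha, hb⟩ := h1
  obtain ⟨q, pol3, pol4, hb', hc⟩ := h2
  rw [hb'] at hb
  obtain ⟨hqp, -⟩ : q = p ∧ pol3 = pol2 := by simpa using hb
  exact ⟨p, pol1, pol4, ha, hqp ▸ hc⟩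

end OMISAux

namespace OMISAux
open Occ

lemma sameVar_symm {o o' : Occurrence} (h : sameVar o o') : sameVar o' o := by
  obtain ⟨p, pol, pol', h1, h2⟩ := h
  exact ⟨p, pol', pol, h2, h1⟩

/-- The relation identifying occurrences of the same variable within `M`,
together with the diagonal on `Occ(K)`. -/
def bigRel (K M : PB) : Rel :=
  {q | IsOcc K q.1 ∧ IsOcc K q.2 ∧
    (q.1 = q.2 ∨ (q.1.1 ∈ M ∧ q.2.1 ∈ M ∧ sameVar q.1 q.2))}

lemma bigRel_equiv (K M : PB) : IsEquivOn K (bigRel K M) := by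
  constructor
  · exact fun q hq => ⟨hq.1, hq.2.1⟩
  · exact fun o ho => ⟨ho, ho, Or.inl rfl⟩
  · rintro q ⟨h1, h2, heq | ⟨a, b, c⟩⟩
    · exact ⟨h2, h1, Or.inl heq.symm⟩
    · exact ⟨h2, h1, Or.inr ⟨b, a, sameVar_symm c⟩⟩
  · rintro a b c ⟨h1, h2, hab⟩ ⟨h2', h3, hbc⟩
    refine ⟨h1, h3, ?_⟩
    rcases hab with heq | ⟨m1, m2, sv1⟩
    · rcases hbc with heq' | ⟨m2', m3, sv2⟩
      · exact Or.inl (heq.trans heq')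
      · exact Or.inr ⟨heq ▸ m2', m3, heq ▸ sv2⟩
    · rcases hbc with heq' | ⟨m2', m3, sv2⟩
      · exact Or.inr ⟨m1, heq' ▸ m2, heq' ▸ sv1⟩
      · exact Or.inr ⟨m1, m3, sameVar_trans sv1 sv2⟩

lemma bigRel_compliant (K M : PB) : Compliant (bigRel K M) := by
  rintro q ⟨h1, h2, heq | ⟨-, -, sv⟩⟩
  · exact heq ▸ sameVar_refl h1
  · exact sv

lemma bigRel_inconsistent (K M : PB) (R : Occurrence → ℕ)
    (hMK : M ⊆ K) (hMinc : ¬ ConsistentPB M) :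
    ¬ RelConsistent K R (bigRel K M) := by
  classical
  rintro ⟨w, hw1, hw2⟩
  apply hMinc
  refine ⟨fun p => if h : ∃ o : Occurrence, o.1 ∈ M ∧
    ∃ pol, occAt o.1 o.2 true = some (p, pol) then w (R h.choose) else false, ?_⟩
  intro φ hφ
  set v : ℕ → Bool := fun p => if h : ∃ o : Occurrence, o.1 ∈ M ∧
    ∃ pol, occAt o.1 o.2 true = some (p, pol) then w (R h.choose) else false with hvdef
  rw [← evalOcc_eval v φ true (fun l => w (R (φ, l))) ?_]
  · rw [← evalOcc_renameBy w φ (fun l => R (φ, l))]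
    exact hw1 φ (hMK hφ)
  · intro l p pol' hl
    have hex : ∃ o : Occurrence, o.1 ∈ M ∧ ∃ pol, occAt o.1 o.2 true = some (p, pol) :=
      ⟨(φ, l), hφ, pol', hl⟩
    have hv : v p = w (R hex.choose) := dif_pos hex
    obtain ⟨hoM, pol₀, hocc⟩ := hex.choose_spec
    have hmem : ((φ, l), hex.choose) ∈ bigRel K M :=
      ⟨⟨hMK hφ, p, pol', hl⟩, ⟨hMK hoM, p, pol₀, hocc⟩,
        Or.inr ⟨hφ, hoM, p, pol', pol₀, hl, hocc⟩⟩
    rw [hv]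
    exact hw2 ((φ, l), hex.choose) hmem

lemma consistent_of_free (K M : PB) (R : Occurrence → ℕ) (hR : IsCRenaming K R)
    (r : Rel) (hre : IsEquivOn K r) (hsub : r ⊆ bigRel K M)
    (φ₀ : Form) (hfree : ∀ (l : List Step) (o' : Occurrence), ((φ₀, l), o') ∈ r → o' = (φ₀, l))
    (v : ℕ → Bool) (hv : modelsPB v (M.erase φ₀)) : RelConsistent K R r := by
  classical
  set w : ℕ → Bool := fun n =>
    if h : ∃ o : Occurrence, IsOcc K o ∧ R o = n then
      (if h.choose.1 ∈ M ∧ h.choose.1 ≠ φ₀ then v (varOf h.choose)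
       else occVal h.choose.1 true h.choose.2)
    else false with hwdef
  have hw : ∀ o : Occurrence, IsOcc K o →
      w (R o) = if o.1 ∈ M ∧ o.1 ≠ φ₀ then v (varOf o) else occVal o.1 true o.2 := by
    intro o ho
    have hex : ∃ o' : Occurrence, IsOcc K o' ∧ R o' = R o := ⟨o, ho, rfl⟩
    have hch : hex.choose = o := hR.inj _ _ hex.choose_spec.1 ho hex.choose_spec.2
    rw [hwdef]
    simp only [dif_pos hex, hch]
  have key : ∀ a b : Occurrence, (a, b) ∈ r → a ≠ b → a.1 ≠ φ₀ := by
    intro a b hab hne h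
    have hab' : ((φ₀, a.2), b) ∈ r := by rw [← h]; exact hab
    have h2 := hfree a.2 b hab'
    apply hne
    rw [h2, ← h]
  refine ⟨w, ?_, ?_⟩
  · intro ψ hψ
    show eval w (renameBy (fun l => R (ψ, l)) ψ) = true
    rw [evalOcc_renameBy w ψ (fun l => R (ψ, l))]
    by_cases hc : ψ ∈ M ∧ ψ ≠ φ₀
    · rw [evalOcc_eval v ψ true _ ?_]
      · exact hv ψ (Finset.mem_erase.2 ⟨hc.2, hc.1⟩)
      · intro l p pol' hl
        rw [hw (ψ, l) ⟨hψ, p, pol', hl⟩, if_pos hc, varOf_eq hl]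
    · rw [evalOcc_congr ψ true _ (occVal ψ true) ?_, evalOcc_occVal]
      intro l hl
      obtain ⟨⟨p, pol'⟩, hx⟩ := Option.isSome_iff_exists.1 hl
      rw [hw (ψ, l) ⟨hψ, p, pol', hx⟩, if_neg hc]
  · intro q hq
    obtain ⟨h1, h2, h3⟩ := hsub hq
    by_cases hqq : q.1 = q.2
    · rw [hqq]
    rcases h3 with heq | ⟨hM1, hM2, hsv⟩
    · exact absurd heq hqq
    have hne1 : q.1.1 ≠ φ₀ := key q.1 q.2 hq hqq
    have hne2 : q.2.1 ≠ φ₀ := key q.2 q.1 (hre.symm q hq) (Ne.symm hqq)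
    rw [hw q.1 h1, hw q.2 h2, if_pos ⟨hM1, hne1⟩, if_pos ⟨hM2, hne2⟩, sameVar_varOf hsv]

end OMISAux

/-- Proposition 4: every minimal inconsistent subset `M` of `K` is
an O-MIS of `K`: there is an MIR `r` of `K` with `M = form_mir(r)` (the set of
formulas of `K` containing an occurrence lying in a class of `r` of size ≥ 2). -/
theorem MIS_is_OMIS (K M : Occ.PB)
    (R : Occ.Occurrence → ℕ) (hR : Occ.IsCRenaming K R)
    (hMK : M ⊆ K) (hMinc : ¬ Occ.ConsistentPB M)
    (hMmin : ∀ φ ∈ M, Occ.ConsistentPB (M.erase φ)) :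
    ∃ r : Occ.Rel, Occ.IsMIR K R r ∧
      ∀ φ : Occ.Form, φ ∈ M ↔ (φ ∈ K ∧
        ∃ (l : List Occ.Step) (o' : Occ.Occurrence),
          ((φ, l), o') ∈ r ∧ o' ≠ (φ, l)) := by
  classical
  open OMISAux in
  have hfinS : {r : Occ.Rel | r ⊆ bigRel K M ∧ Occ.IsEquivOn K r ∧ Occ.Compliant r ∧
      ¬ Occ.RelConsistent K R r}.Finite := by
    apply Set.Finite.subset (Set.Finite.finite_subsets
      (((occ_finite K).prod (occ_finite K))))
    intro r hr
    refine fun q hq => ?_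
    have h := hr.1 hq
    exact ⟨h.1, h.2.1⟩
  have hS0 : bigRel K M ∈ {r : Occ.Rel | r ⊆ bigRel K M ∧ Occ.IsEquivOn K r ∧
      Occ.Compliant r ∧ ¬ Occ.RelConsistent K R r} :=
    ⟨subset_rfl, bigRel_equiv K M, bigRel_compliant K M,
      bigRel_inconsistent K M R hMK hMinc⟩
  obtain ⟨r, hrS, hrmin⟩ := hfinS.exists_minimal ⟨bigRel K M, hS0⟩
  obtain ⟨hsub, hequiv, hcomp, hinc⟩ := hrS
  refine ⟨r, ⟨hequiv, hcomp, hinc, ?_⟩, ?_⟩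
  · intro r' he' hc' hinc' hss
    have hmem : r' ∈ {r : Occ.Rel | r ⊆ bigRel K M ∧ Occ.IsEquivOn K r ∧
        Occ.Compliant r ∧ ¬ Occ.RelConsistent K R r} :=
      ⟨hss.subset.trans hsub, he', hc', hinc'⟩
    exact hss.ne (le_antisymm hss.subset (hrmin hmem hss.subset))
  · intro φ
    constructor
    · intro hφM
      refine ⟨hMK hφM, ?_⟩
      by_contra hno
      push_neg at hno
      obtain ⟨v, hv⟩ := hMmin φ hφM
      exact hinc (consistent_of_free K M R hR r hequiv hsub φ hno v hv)
    · rintro ⟨hφK, l, o', ho', hne⟩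
      obtain ⟨-, -, h3⟩ := hsub ho'
      rcases h3 with heq | ⟨h1, -, -⟩
      · exact absurd heq.symm hne
      · exact h1
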